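/- arXiv:math/0011047 — 2 statements merged into one kernel-verified Lean document; each statement's English description precedes it below -/
import Mathlib

section
/- For a positive integer N and parameters a, b, the balanced hypergeometric series identity ₄F₃[−N/2, 1/2−N/2, −a, a+b; 1−N, b/2, 1/2+b/2; 1] = (a+b)_N/(b)_N + (−a)_N/(b)_N holds (Andrews–Burge summation). Equivalently, as a terminating sum: Σ_{k≥0} (−N/2)_k (1/2−N/2)_k (−a)_k (a+b)_k / (k! (1−N)_k (b/2)_k (1/2+b/2)_k) = ((a+b)_N + (−a)_N)/(b)_N. -/
open Finset

noncomputable section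

/-- rising factorial -/
def rf {R : Type*} [CommRing R] (a : R) (k : ℕ) : R := ∏ i ∈ Finset.range k, (a + i)


lemma rf_zero (a : ℝ) : rf a 0 = 1 := by simp [rf]

lemma rf_succ (a : ℝ) (k : ℕ) : rf a (k + 1) = rf a k * (a + k) := by
  simp [rf, Finset.prod_range_succ]

lemma rf_shift (x : ℝ) (k : ℕ) : x * rf (x + 1) k = rf x k * (x + k) := by
  have h1 : rf x (k + 1) = (∏ i ∈ Finset.range k, (x + (i + 1))) * (x + 0) := by
    rw [rf, Finset.prod_range_succ']
    congr 1
    · apply Finset.prod_congr rfl; intro i _; push_cast; ring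
    · norm_num
  have h2 : (∏ i ∈ Finset.range k, (x + ((i : ℝ) + 1))) = rf (x + 1) k := by
    rw [rf]; apply Finset.prod_congr rfl; intro i _; ring
  have := rf_succ x k
  rw [h1, h2] at this
  linarith [this]

lemma rf_eq_zero {x : ℝ} {k i : ℕ} (hi : i < k) (h : x + i = 0) : rf x k = 0 :=
  Finset.prod_eq_zero (Finset.mem_range.mpr hi) h

lemma rf_factor_ne_zero {x : ℝ} {k : ℕ} (h : rf x k ≠ 0) {i : ℕ} (hi : i < k) : x + i ≠ 0 :=
  fun h0 => h (rf_eq_zero hi h0)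

lemma rf_ne_zero {x : ℝ} {k : ℕ} (h : ∀ i < k, x + (i : ℝ) ≠ 0) : rf x k ≠ 0 :=
  Finset.prod_ne_zero_iff.mpr fun i hi => h i (Finset.mem_range.mp hi)

def TT (a b : ℝ) (N k : ℕ) : ℝ :=
  rf (-(N : ℝ) / 2) k * rf (1 / 2 - (N : ℝ) / 2) k * rf (-a) k * rf (a + b) k
    / ((Nat.factorial k : ℝ) * rf (1 - (N : ℝ)) k * rf (b / 2) k * rf (1 / 2 + b / 2) k)

lemma TT_vanish (a b : ℝ) (N k : ℕ) (h : N < 2 * k) : TT a b N k = 0 := by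
  rcases Nat.even_or_odd N with ⟨m, hm⟩ | ⟨m, hm⟩
  · have h1 : rf (-(N : ℝ) / 2) k = 0 := by
      apply rf_eq_zero (i := m) (by omega)
      subst hm; push_cast; ring
    unfold TT; rw [h1]; simp
  · have h1 : rf (1 / 2 - (N : ℝ) / 2) k = 0 := by
      apply rf_eq_zero (i := m) (by omega)
      subst hm; push_cast; ring
    unfold TT; rw [h1]; simp

set_option maxHeartbeats 1000000 in
lemma step_term (a b : ℝ) (M k : ℕ) (hM : 3 ≤ M) (hk2 : 2 * k + 2 ≤ M + 2)
    (hC : rf (b / 2) (k + 1) ≠ 0) (hD : rf (1 / 2 + b / 2) (k + 1) ≠ 0) :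
    (a + b + M) * ((M : ℝ) - a) * TT a b M k
      - (b + 2 * M + 1) * (b + M) * TT a b (M + 1) k
      + (b + M + 1) * (b + M) * TT a b (M + 2) k
    = (-(((k : ℝ) + 1) * M * (b + 2 * k + 1) * (b + 2 * k)) / (((M : ℝ) + 2) * ((M : ℝ) - k)))
        * TT a b (M + 2) (k + 1)
      - (-((k : ℝ) * M * (b + 2 * k - 1) * (b + 2 * k - 2)) / (((M : ℝ) + 2) * ((M : ℝ) + 1 - k)))
        * TT a b (M + 2) k := by
  have hkM : k < M := by omega
  have hm3 : (3 : ℝ) ≤ (M : ℝ) := by exact_mod_cast hM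
  have hkR : (k : ℝ) < (M : ℝ) := by exact_mod_cast hkM
  have hk0 : (0 : ℝ) ≤ (k : ℝ) := Nat.cast_nonneg k
  have hm2 : (M : ℝ) + 2 ≠ 0 := ne_of_gt (by linarith)
  have hmk : (M : ℝ) - k ≠ 0 := ne_of_gt (by linarith)
  have hmk1 : (M : ℝ) + 1 - k ≠ 0 := ne_of_gt (by linarith)
  have hmk2 : (k : ℝ) - (M : ℝ) - 1 ≠ 0 := ne_of_lt (by linarith)
  have hk1 : (k : ℝ) + 1 ≠ 0 := ne_of_gt (by linarith)
  have hF : ((Nat.factorial k : ℕ) : ℝ) ≠ 0 := Nat.cast_ne_zero.mpr (Nat.factorial_ne_zero k)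
  have hsmall : ∀ i : ℕ, i < k → (i : ℝ) < (M : ℝ) - 1 := by
    intro i hi
    have : i + 2 ≤ M := by omega
    have h2 : (i : ℝ) + 2 ≤ (M : ℝ) := by exact_mod_cast this
    linarith
  have hr : rf (-(M : ℝ) - 1) k ≠ 0 :=
    rf_ne_zero fun i hi => ne_of_lt (by have := hsmall i hi; linarith)
  have hw : rf (1 - (M : ℝ)) k ≠ 0 :=
    rf_ne_zero fun i hi => ne_of_lt (by have := hsmall i hi; linarith)
  have hrm_ne : rf (-(M : ℝ)) k ≠ 0 :=
    rf_ne_zero fun i hi => ne_of_lt (by have := hsmall i hi; linarith)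
  have hrk : -(M : ℝ) - 1 + k ≠ 0 := ne_of_lt (by linarith)
  rw [rf_succ (b / 2) k] at hC
  rw [rf_succ (1 / 2 + b / 2) k] at hD
  obtain ⟨hC0, hCk⟩ := mul_ne_zero_iff.mp hC
  obtain ⟨hD0, hDk⟩ := mul_ne_zero_iff.mp hD
  have hx1 : -(M : ℝ) / 2 - 1 ≠ 0 := ne_of_lt (by linarith)
  have hx2 : -(M : ℝ) / 2 - 1 / 2 ≠ 0 := ne_of_lt (by linarith)
  have hx3 : -(M : ℝ) - 1 ≠ 0 := ne_of_lt (by linarith)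
  have hx4 : -(M : ℝ) ≠ 0 := ne_of_lt (by linarith)
  have hbk : b + 2 * (k : ℝ) ≠ 0 := by intro h; apply hCk; linarith
  have hbk1 : b + 1 + 2 * (k : ℝ) ≠ 0 := by intro h; apply hDk; linarith
  have eP := rf_shift (-(M : ℝ) / 2 - 1) k
  rw [show -(M : ℝ) / 2 - 1 + 1 = -(M : ℝ) / 2 by ring] at eP
  have eQ := rf_shift (-(M : ℝ) / 2 - 1 / 2) k
  rw [show -(M : ℝ) / 2 - 1 / 2 + 1 = 1 / 2 - (M : ℝ) / 2 by ring] at eQ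
  have eR := rf_shift (-(M : ℝ) - 1) k
  rw [show -(M : ℝ) - 1 + 1 = -(M : ℝ) by ring] at eR
  have eR1 := rf_shift (-(M : ℝ)) k
  rw [show -(M : ℝ) + 1 = 1 - (M : ℝ) by ring] at eR1
  have eRR : ((-(M : ℝ) - 1) * (-(M : ℝ))) * rf (1 - (M : ℝ)) k
      = rf (-(M : ℝ) - 1) k * ((-(M : ℝ) - 1 + k) * (-(M : ℝ) + k)) := by
    linear_combination (-(M : ℝ) - 1) * eR1 + (-(M : ℝ) + (k : ℝ)) * eR
  have castM2 : ((M + 2 : ℕ) : ℝ) = (M : ℝ) + 2 := by push_cast; ring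
  have castM1 : ((M + 1 : ℕ) : ℝ) = (M : ℝ) + 1 := by push_cast; ring
  have castF : ((Nat.factorial (k + 1) : ℕ) : ℝ) = ((k : ℝ) + 1) * (Nat.factorial k : ℝ) := by
    rw [Nat.factorial_succ]; push_cast; ring
  have hTM : TT a b M k = TT a b (M + 2) k
      * (((M : ℝ) + 2 - 2 * k) * (((M : ℝ) + 1 - 2 * k) * (M : ℝ)))
      / (((M : ℝ) + 2) * (((M : ℝ) + 1 - k) * ((M : ℝ) - k))) := by
    simp only [TT, castM2]
    rw [show -((M : ℝ) + 2) / 2 = -(M : ℝ) / 2 - 1 by ring,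
        show (1 : ℝ) / 2 - ((M : ℝ) + 2) / 2 = -(M : ℝ) / 2 - 1 / 2 by ring,
        show (1 : ℝ) - ((M : ℝ) + 2) = -(M : ℝ) - 1 by ring]
    rw [div_mul_eq_mul_div, div_div, div_eq_div_iff
      (mul_ne_zero (mul_ne_zero (mul_ne_zero hF hw) hC0) hD0)
      (mul_ne_zero (mul_ne_zero (mul_ne_zero (mul_ne_zero hF hr) hC0) hD0)
        (mul_ne_zero hm2 (mul_ne_zero hmk1 hmk)))]
    apply mul_left_cancel₀
      (mul_ne_zero (mul_ne_zero hx1 hx2) (mul_ne_zero hx3 hx4))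
    linear_combination
      ((-(M : ℝ) / 2 - 1 / 2) * rf (1 / 2 - (M : ℝ) / 2) k * ((-(M : ℝ) - 1) * (-(M : ℝ)))
        * rf (-(M : ℝ) - 1) k
        * (rf (-a) k * rf (a + b) k * (Nat.factorial k : ℝ) * rf (b / 2) k * rf (1 / 2 + b / 2) k)
        * (((M : ℝ) + 2) * (((M : ℝ) + 1 - k) * ((M : ℝ) - k)))) * eP
      + (rf (-(M : ℝ) / 2 - 1) k * (-(M : ℝ) / 2 - 1 + k) * ((-(M : ℝ) - 1) * (-(M : ℝ)))
        * rf (-(M : ℝ) - 1) k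
        * (rf (-a) k * rf (a + b) k * (Nat.factorial k : ℝ) * rf (b / 2) k * rf (1 / 2 + b / 2) k)
        * (((M : ℝ) + 2) * (((M : ℝ) + 1 - k) * ((M : ℝ) - k)))) * eQ
      - ((-(M : ℝ) / 2 - 1) * (-(M : ℝ) / 2 - 1 / 2) * rf (-(M : ℝ) / 2 - 1) k
        * rf (-(M : ℝ) / 2 - 1 / 2) k
        * (((M : ℝ) + 2 - 2 * k) * (((M : ℝ) + 1 - 2 * k) * (M : ℝ)))
        * (rf (-a) k * rf (a + b) k * (Nat.factorial k : ℝ) * rf (b / 2) k * rf (1 / 2 + b / 2) k))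
        * eRR
  have hTM1 : TT a b (M + 1) k = TT a b (M + 2) k
      * (((M : ℝ) + 2 - 2 * k) * ((M : ℝ) + 1))
      / (((M : ℝ) + 2) * ((M : ℝ) + 1 - k)) := by
    simp only [TT, castM2, castM1]
    rw [show -((M : ℝ) + 2) / 2 = -(M : ℝ) / 2 - 1 by ring,
        show (1 : ℝ) / 2 - ((M : ℝ) + 2) / 2 = -(M : ℝ) / 2 - 1 / 2 by ring,
        show (1 : ℝ) - ((M : ℝ) + 2) = -(M : ℝ) - 1 by ring,
        show -((M : ℝ) + 1) / 2 = -(M : ℝ) / 2 - 1 / 2 by ring,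
        show (1 : ℝ) / 2 - ((M : ℝ) + 1) / 2 = -(M : ℝ) / 2 by ring,
        show (1 : ℝ) - ((M : ℝ) + 1) = -(M : ℝ) by ring]
    rw [div_mul_eq_mul_div, div_div, div_eq_div_iff
      (mul_ne_zero (mul_ne_zero (mul_ne_zero hF hrm_ne) hC0) hD0)
      (mul_ne_zero (mul_ne_zero (mul_ne_zero (mul_ne_zero hF hr) hC0) hD0)
        (mul_ne_zero hm2 hmk1))]
    apply mul_left_cancel₀ (mul_ne_zero hx1 hx3)
    linear_combination
      ((-(M : ℝ) - 1) * rf (-(M : ℝ) - 1) k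
        * (rf (-(M : ℝ) / 2 - 1 / 2) k * rf (-a) k * rf (a + b) k * (Nat.factorial k : ℝ)
            * rf (b / 2) k * rf (1 / 2 + b / 2) k)
        * (((M : ℝ) + 2) * ((M : ℝ) + 1 - k))) * eP
      - ((-(M : ℝ) / 2 - 1) * rf (-(M : ℝ) / 2 - 1) k
        * (((M : ℝ) + 2 - 2 * k) * ((M : ℝ) + 1))
        * (rf (-(M : ℝ) / 2 - 1 / 2) k * rf (-a) k * rf (a + b) k * (Nat.factorial k : ℝ)
            * rf (b / 2) k * rf (1 / 2 + b / 2) k)) * eR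
  have hTk1 : TT a b (M + 2) (k + 1) = TT a b (M + 2) k
      * ((2 * (k : ℝ) - M - 2) * ((2 * (k : ℝ) - M - 1) * (((k : ℝ) - a) * (a + b + k))))
      / (((k : ℝ) + 1) * (((k : ℝ) - M - 1) * ((b + 2 * k) * (b + 1 + 2 * k)))) := by
    simp only [TT, castM2, castF]
    rw [show -((M : ℝ) + 2) / 2 = -(M : ℝ) / 2 - 1 by ring,
        show (1 : ℝ) / 2 - ((M : ℝ) + 2) / 2 = -(M : ℝ) / 2 - 1 / 2 by ring,
        show (1 : ℝ) - ((M : ℝ) + 2) = -(M : ℝ) - 1 by ring]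
    rw [rf_succ (-(M : ℝ) / 2 - 1) k, rf_succ (-(M : ℝ) / 2 - 1 / 2) k, rf_succ (-a) k,
        rf_succ (a + b) k, rf_succ (-(M : ℝ) - 1) k, rf_succ (b / 2) k,
        rf_succ (1 / 2 + b / 2) k]
    rw [div_mul_eq_mul_div, div_div, div_eq_div_iff
      (by
        apply mul_ne_zero
        apply mul_ne_zero
        apply mul_ne_zero
        · exact mul_ne_zero hk1 hF
        · exact mul_ne_zero hr hrk
        · exact mul_ne_zero hC0 hCk
        · exact mul_ne_zero hD0 hDk)
      (mul_ne_zero (mul_ne_zero (mul_ne_zero (mul_ne_zero hF hr) hC0) hD0)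
        (mul_ne_zero hk1 (mul_ne_zero hmk2 (mul_ne_zero hbk hbk1))))]
    ring
  rw [hTM, hTM1, hTk1]
  have key : (a + b + (M : ℝ)) * ((M : ℝ) - a)
        * ((((M : ℝ) + 2 - 2 * k) * (((M : ℝ) + 1 - 2 * k) * (M : ℝ)))
          / (((M : ℝ) + 2) * (((M : ℝ) + 1 - k) * ((M : ℝ) - k))))
      - (b + 2 * (M : ℝ) + 1) * (b + (M : ℝ))
        * ((((M : ℝ) + 2 - 2 * k) * ((M : ℝ) + 1)) / (((M : ℝ) + 2) * ((M : ℝ) + 1 - k)))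
      + (b + (M : ℝ) + 1) * (b + (M : ℝ))
    = (-(((k : ℝ) + 1) * M * (b + 2 * k + 1) * (b + 2 * k)) / (((M : ℝ) + 2) * ((M : ℝ) - k)))
        * (((2 * (k : ℝ) - M - 2) * ((2 * (k : ℝ) - M - 1) * (((k : ℝ) - a) * (a + b + k))))
          / (((k : ℝ) + 1) * (((k : ℝ) - M - 1) * ((b + 2 * k) * (b + 1 + 2 * k)))))
      - (-((k : ℝ) * M * (b + 2 * k - 1) * (b + 2 * k - 2))
          / (((M : ℝ) + 2) * ((M : ℝ) + 1 - k))) := by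
    field_simp
    ring
  linear_combination (TT a b (M + 2) k) * key

set_option maxHeartbeats 1000000 in
lemma bdry (a b : ℝ) (M K : ℕ) (hM : 3 ≤ M) (hNK : M + 2 = 2 * K ∨ M + 2 = 2 * K + 1)
    (hC : rf (b / 2) K ≠ 0) (hD : rf (1 / 2 + b / 2) K ≠ 0) :
    (a + b + M) * ((M : ℝ) - a) * TT a b M K
      - (b + 2 * M + 1) * (b + M) * TT a b (M + 1) K
      + (b + M + 1) * (b + M) * TT a b (M + 2) K
    = -((-((K : ℝ) * M * (b + 2 * K - 1) * (b + 2 * K - 2))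
        / (((M : ℝ) + 2) * ((M : ℝ) + 1 - K))) * TT a b (M + 2) K) := by
  rcases hNK with hE | hO
  · -- even: M = 2j+4, K = j+3
    obtain ⟨j, rfl, rfl⟩ : ∃ j, M = 2 * j + 4 ∧ K = j + 3 := ⟨K - 3, by omega, by omega⟩
    have h0 : TT a b (2 * j + 4) (j + 3) = 0 := TT_vanish a b _ _ (by omega)
    have h1 : TT a b (2 * j + 4 + 1) (j + 3) = 0 := TT_vanish a b _ _ (by omega)
    rw [h0, h1]
    have hden : (((2 * j + 4 : ℕ) : ℝ) + 2) * (((2 * j + 4 : ℕ) : ℝ) + 1 - ((j + 3 : ℕ) : ℝ)) ≠ 0 := by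
      push_cast
      have hJ0 : (0:ℝ) ≤ (j:ℝ) := Nat.cast_nonneg j
      intro h
      nlinarith
    have key : (b + ((2 * j + 4 : ℕ) : ℝ) + 1) * (b + ((2 * j + 4 : ℕ) : ℝ))
        = (((j + 3 : ℕ) : ℝ) * ((2 * j + 4 : ℕ) : ℝ) * (b + 2 * ((j + 3 : ℕ) : ℝ) - 1)
            * (b + 2 * ((j + 3 : ℕ) : ℝ) - 2))
          / ((((2 * j + 4 : ℕ) : ℝ) + 2) * (((2 * j + 4 : ℕ) : ℝ) + 1 - ((j + 3 : ℕ) : ℝ))) := by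
      rw [eq_div_iff hden]
      push_cast
      ring
    linear_combination (TT a b (2 * j + 4 + 2) (j + 3)) * key
  · -- odd: M = 2j+3, K = j+2
    obtain ⟨j, rfl, rfl⟩ : ∃ j, M = 2 * j + 3 ∧ K = j + 2 := ⟨K - 2, by omega, by omega⟩
    have h0 : TT a b (2 * j + 3) (j + 2) = 0 := TT_vanish a b _ _ (by omega)
    rw [h0]
    have hJ0 : (0 : ℝ) ≤ (j : ℝ) := Nat.cast_nonneg j
    have hF : ((Nat.factorial (j + 2) : ℕ) : ℝ) ≠ 0 :=
      Nat.cast_ne_zero.mpr (Nat.factorial_ne_zero _)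
    have hr : rf (-2 * (j : ℝ) - 4) (j + 2) ≠ 0 := by
      apply rf_ne_zero
      intro i hi
      have : (i : ℝ) ≤ (j : ℝ) + 1 := by
        have : i ≤ j + 1 := by omega
        exact_mod_cast this
      exact ne_of_lt (by linarith)
    have hrm : rf (-2 * (j : ℝ) - 3) (j + 2) ≠ 0 := by
      apply rf_ne_zero
      intro i hi
      have : (i : ℝ) ≤ (j : ℝ) + 1 := by
        have : i ≤ j + 1 := by omega
        exact_mod_cast this
      exact ne_of_lt (by linarith)
    have hx1 : -(j : ℝ) - 5 / 2 ≠ 0 := ne_of_lt (by linarith)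
    have hx3 : -2 * (j : ℝ) - 4 ≠ 0 := ne_of_lt (by linarith)
    have eP := rf_shift (-(j : ℝ) - 5 / 2) (j + 2)
    rw [show -(j : ℝ) - 5 / 2 + 1 = -(j : ℝ) - 3 / 2 by ring] at eP
    have eR := rf_shift (-2 * (j : ℝ) - 4) (j + 2)
    rw [show -2 * (j : ℝ) - 4 + 1 = -2 * (j : ℝ) - 3 by ring] at eR
    have castj2 : ((j + 2 : ℕ) : ℝ) = (j : ℝ) + 2 := by push_cast; ring
    rw [castj2] at eP eR
    -- ratio: TT (2j+4) (j+2) = TT (2j+5) (j+2) * (2J+4) / ((2J+5)*(J+2))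
    have hT : TT a b (2 * j + 3 + 1) (j + 2) = TT a b (2 * j + 3 + 2) (j + 2)
        * (2 * (j : ℝ) + 4) / ((2 * (j : ℝ) + 5) * ((j : ℝ) + 2)) := by
      simp only [TT]
      rw [show ((2 * j + 3 + 1 : ℕ) : ℝ) = 2 * (j : ℝ) + 4 by push_cast; ring,
          show ((2 * j + 3 + 2 : ℕ) : ℝ) = 2 * (j : ℝ) + 5 by push_cast; ring]
      rw [show -(2 * (j : ℝ) + 4) / 2 = -(j : ℝ) - 2 by ring,
          show (1 : ℝ) / 2 - (2 * (j : ℝ) + 4) / 2 = -(j : ℝ) - 3 / 2 by ring,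
          show (1 : ℝ) - (2 * (j : ℝ) + 4) = -2 * (j : ℝ) - 3 by ring,
          show -(2 * (j : ℝ) + 5) / 2 = -(j : ℝ) - 5 / 2 by ring,
          show (1 : ℝ) / 2 - (2 * (j : ℝ) + 5) / 2 = -(j : ℝ) - 2 by ring,
          show (1 : ℝ) - (2 * (j : ℝ) + 5) = -2 * (j : ℝ) - 4 by ring]
      rw [div_mul_eq_mul_div, div_div, div_eq_div_iff
        (mul_ne_zero (mul_ne_zero (mul_ne_zero hF hrm) hC) hD)
        (mul_ne_zero (mul_ne_zero (mul_ne_zero (mul_ne_zero hF hr) hC) hD)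
          (mul_ne_zero (ne_of_gt (by linarith)) (ne_of_gt (by linarith))))]
      apply mul_left_cancel₀ (mul_ne_zero hx1 hx3)
      linear_combination
        ((-2 * (j : ℝ) - 4) * rf (-2 * (j : ℝ) - 4) (j + 2)
          * (rf (-(j : ℝ) - 2) (j + 2) * rf (-a) (j + 2) * rf (a + b) (j + 2)
              * ((Nat.factorial (j + 2) : ℕ) : ℝ) * rf (b / 2) (j + 2)
              * rf (1 / 2 + b / 2) (j + 2))
          * ((2 * (j : ℝ) + 5) * ((j : ℝ) + 2))) * eP
        - ((-(j : ℝ) - 5 / 2) * rf (-(j : ℝ) - 5 / 2) (j + 2) * (2 * (j : ℝ) + 4)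
          * (rf (-(j : ℝ) - 2) (j + 2) * rf (-a) (j + 2) * rf (a + b) (j + 2)
              * ((Nat.factorial (j + 2) : ℕ) : ℝ) * rf (b / 2) (j + 2)
              * rf (1 / 2 + b / 2) (j + 2))) * eR
    rw [hT]
    have hden2 : ((2 * (j : ℝ) + 5) * ((j : ℝ) + 2)) ≠ 0 :=
      mul_ne_zero (ne_of_gt (by linarith)) (ne_of_gt (by linarith))
    have hden3 : (((2 * j + 3 : ℕ) : ℝ) + 2) * (((2 * j + 3 : ℕ) : ℝ) + 1 - ((j + 2 : ℕ) : ℝ)) ≠ 0 := by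
      push_cast
      intro h
      nlinarith
    have key : -(b + 2 * ((2 * j + 3 : ℕ) : ℝ) + 1) * (b + ((2 * j + 3 : ℕ) : ℝ))
          * ((2 * (j : ℝ) + 4) / ((2 * (j : ℝ) + 5) * ((j : ℝ) + 2)))
        + (b + ((2 * j + 3 : ℕ) : ℝ) + 1) * (b + ((2 * j + 3 : ℕ) : ℝ))
        = -(-(((j + 2 : ℕ) : ℝ) * ((2 * j + 3 : ℕ) : ℝ) * (b + 2 * ((j + 2 : ℕ) : ℝ) - 1)
              * (b + 2 * ((j + 2 : ℕ) : ℝ) - 2))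
            / ((((2 * j + 3 : ℕ) : ℝ) + 2) * (((2 * j + 3 : ℕ) : ℝ) + 1 - ((j + 2 : ℕ) : ℝ)))) := by
      have h25 : 2 * (j : ℝ) + 5 ≠ 0 := ne_of_gt (by linarith)
      have hj2 : (j : ℝ) + 2 ≠ 0 := ne_of_gt (by linarith)
      have hA : 2 * (j : ℝ) + 3 + 2 ≠ 0 := ne_of_gt (by linarith)
      have hB : 2 * (j : ℝ) + 3 + 1 - ((j : ℝ) + 2) ≠ 0 := ne_of_gt (by linarith)
      push_cast
      field_simp [hA, hB, h25, hj2]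
      ring
    linear_combination (TT a b (2 * j + 3 + 2) (j + 2)) * key


lemma sum_extend (a b : ℝ) (M K : ℕ) (h : M / 2 ≤ K) :
    ∑ k ∈ Finset.range (K + 1), TT a b M k = ∑ k ∈ Finset.range (M / 2 + 1), TT a b M k :=
  (Finset.sum_subset (Finset.range_subset_range.mpr (by omega))
    (fun x _ hx => TT_vanish a b M x (by
      simp only [Finset.mem_range, not_lt] at hx
      omega))).symm

lemma sum_rec (a b : ℝ) (M : ℕ) (hM : 3 ≤ M)
    (hden : ∀ k, k ≤ (M + 2) / 2 → rf (b / 2) k ≠ 0 ∧ rf (1 / 2 + b / 2) k ≠ 0) :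
    (a + b + M) * ((M : ℝ) - a) * (∑ k ∈ Finset.range ((M + 2) / 2 + 1), TT a b M k)
      - (b + 2 * M + 1) * (b + M) * (∑ k ∈ Finset.range ((M + 2) / 2 + 1), TT a b (M + 1) k)
      + (b + M + 1) * (b + M) * (∑ k ∈ Finset.range ((M + 2) / 2 + 1), TT a b (M + 2) k)
    = 0 := by
  set K := (M + 2) / 2 with hK
  set G : ℕ → ℝ := fun k =>
    (-((k : ℝ) * M * (b + 2 * (k : ℝ) - 1) * (b + 2 * (k : ℝ) - 2))
      / (((M : ℝ) + 2) * ((M : ℝ) + 1 - (k : ℝ)))) * TT a b (M + 2) k with hG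
  have hcombine : (a + b + M) * ((M : ℝ) - a) * (∑ k ∈ Finset.range (K + 1), TT a b M k)
      - (b + 2 * M + 1) * (b + M) * (∑ k ∈ Finset.range (K + 1), TT a b (M + 1) k)
      + (b + M + 1) * (b + M) * (∑ k ∈ Finset.range (K + 1), TT a b (M + 2) k)
      = ∑ k ∈ Finset.range (K + 1),
          ((a + b + M) * ((M : ℝ) - a) * TT a b M k
            - (b + 2 * M + 1) * (b + M) * TT a b (M + 1) k
            + (b + M + 1) * (b + M) * TT a b (M + 2) k) := by
    rw [Finset.mul_sum, Finset.mul_sum, Finset.mul_sum, ← Finset.sum_sub_distrib,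
      ← Finset.sum_add_distrib]
  rw [hcombine, Finset.sum_range_succ]
  have hstep : ∀ k ∈ Finset.range K,
      ((a + b + M) * ((M : ℝ) - a) * TT a b M k
        - (b + 2 * M + 1) * (b + M) * TT a b (M + 1) k
        + (b + M + 1) * (b + M) * TT a b (M + 2) k) = G (k + 1) - G k := by
    intro k hk
    have hkK : k < K := Finset.mem_range.mp hk
    have hk2 : 2 * k + 2 ≤ M + 2 := by omega
    rw [step_term a b M k hM hk2 (hden (k + 1) (by omega)).1 (hden (k + 1) (by omega)).2, hG]
    push_cast
    ring
  rw [Finset.sum_congr rfl hstep, Finset.sum_range_sub G]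
  have hG0 : G 0 = 0 := by simp [hG]
  have hbd := bdry a b M K hM (by omega) (hden K le_rfl).1 (hden K le_rfl).2
  rw [hG0, hbd, hG]
  ring

lemma f_rec (a b : ℝ) (M : ℕ) (hb : rf b (M + 2) ≠ 0) :
    (a + b + M) * ((M : ℝ) - a) * ((rf (a + b) M + rf (-a) M) / rf b M)
      - (b + 2 * M + 1) * (b + M) * ((rf (a + b) (M + 1) + rf (-a) (M + 1)) / rf b (M + 1))
      + (b + M + 1) * (b + M) * ((rf (a + b) (M + 2) + rf (-a) (M + 2)) / rf b (M + 2))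
    = 0 := by
  have hbM : rf b M ≠ 0 := rf_ne_zero fun i hi => rf_factor_ne_zero hb (by omega)
  have hf1 : b + (M : ℝ) ≠ 0 := by
    have := rf_factor_ne_zero hb (show M < M + 2 by omega)
    exact this
  have hf2 : b + ((M : ℝ) + 1) ≠ 0 := by
    have := rf_factor_ne_zero hb (show M + 1 < M + 2 by omega)
    rw [show ((M + 1 : ℕ) : ℝ) = (M : ℝ) + 1 by push_cast; ring] at this
    exact this
  have e1 : rf (a + b) (M + 1) = rf (a + b) M * (a + b + M) := rf_succ _ _
  have e2 : rf (-a) (M + 1) = rf (-a) M * (-a + M) := rf_succ _ _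
  have e3 : rf b (M + 1) = rf b M * (b + M) := rf_succ _ _
  have e4 : rf (a + b) (M + 2) = rf (a + b) M * (a + b + M) * (a + b + ((M : ℝ) + 1)) := by
    rw [show M + 2 = (M + 1) + 1 from rfl, rf_succ, e1,
      show ((M + 1 : ℕ) : ℝ) = (M : ℝ) + 1 by push_cast; ring]
  have e5 : rf (-a) (M + 2) = rf (-a) M * (-a + M) * (-a + ((M : ℝ) + 1)) := by
    rw [show M + 2 = (M + 1) + 1 from rfl, rf_succ, e2,
      show ((M + 1 : ℕ) : ℝ) = (M : ℝ) + 1 by push_cast; ring]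
  have e6 : rf b (M + 2) = rf b M * (b + M) * (b + ((M : ℝ) + 1)) := by
    rw [show M + 2 = (M + 1) + 1 from rfl, rf_succ, e3,
      show ((M + 1 : ℕ) : ℝ) = (M : ℝ) + 1 by push_cast; ring]
  rw [e1, e2, e3, e4, e5, e6]
  field_simp
  ring


lemma rf_one (x : ℝ) : rf x 1 = x := by
  rw [show (1 : ℕ) = 0 + 1 from rfl, rf_succ, rf_zero]; push_cast; ring
lemma rf_two (x : ℝ) : rf x 2 = x * (x + 1) := by
  rw [show (2 : ℕ) = 1 + 1 from rfl, rf_succ, rf_one]; push_cast; ring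
lemma rf_three (x : ℝ) : rf x 3 = x * (x + 1) * (x + 2) := by
  rw [show (3 : ℕ) = 2 + 1 from rfl, rf_succ, rf_two]; push_cast; ring
lemma rf_four (x : ℝ) : rf x 4 = x * (x + 1) * (x + 2) * (x + 3) := by
  rw [show (4 : ℕ) = 3 + 1 from rfl, rf_succ, rf_three]; push_cast; ring

lemma main_aux : ∀ N : ℕ, 0 < N → ∀ a b : ℝ, rf b N ≠ 0 →
    (∀ k, k ≤ N / 2 → rf (b / 2) k ≠ 0 ∧ rf (1 / 2 + b / 2) k ≠ 0) →
    ∑ k ∈ Finset.range (N / 2 + 1), TT a b N k = (rf (a + b) N + rf (-a) N) / rf b N := by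
  intro N
  induction N using Nat.strong_induction_on with
  | _ N ih =>
    intro hN a b hb hden
    by_cases hsmall : N ≤ 4
    · have hfac : ∀ i, i < N → b + (i : ℝ) ≠ 0 := fun i hi => rf_factor_ne_zero hb hi
      interval_cases N
      · -- N = 1
        have hb0 : b ≠ 0 := by have := hfac 0 (by norm_num); simpa using this
        simp only [show (1 : ℕ) / 2 + 1 = 1 by norm_num, Finset.sum_range_one]
        simp only [TT, rf_zero, rf_one]
        norm_num [Nat.factorial]
        field_simp
      · -- N = 2
        have hb0 : b ≠ 0 := by have := hfac 0 (by norm_num); simpa using this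
        have hb1 : b + 1 ≠ 0 := by have := hfac 1 (by norm_num); simpa using this
        have hc0 : b / 2 ≠ 0 := by intro h; apply hb0; linarith
        have hd0 : 1 / 2 + b / 2 ≠ 0 := by intro h; apply hb1; linarith
        have hB : b * (b + 1) ≠ 0 := mul_ne_zero hb0 hb1
        simp only [show (2 : ℕ) / 2 + 1 = 2 by norm_num]
        rw [Finset.sum_range_succ, Finset.sum_range_one]
        simp only [TT, rf_zero, rf_one, rf_two]
        norm_num [Nat.factorial]
        rw [show 1 / 2 * a * (a + b) / (b / 2 * (1 / 2 + b / 2))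
              = 2 * a * (a + b) / (b * (b + 1)) by
            rw [div_eq_div_iff (mul_ne_zero hc0 hd0) hB]; ring]
        rw [eq_div_iff hB, add_mul, div_mul_cancel₀ _ hB]
        ring
      · -- N = 3
        have hb0 : b ≠ 0 := by have := hfac 0 (by norm_num); simpa using this
        have hb1 : b + 1 ≠ 0 := by have := hfac 1 (by norm_num); simpa using this
        have hb2 : b + 2 ≠ 0 := by have := hfac 2 (by norm_num); simpa using this
        have hc0 : b / 2 ≠ 0 := by intro h; apply hb0; linarith
        have hd0 : 1 / 2 + b / 2 ≠ 0 := by intro h; apply hb1; linarith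
        have hB : b * (b + 1) * (b + 2) ≠ 0 := mul_ne_zero (mul_ne_zero hb0 hb1) hb2
        simp only [show (3 : ℕ) / 2 + 1 = 2 by norm_num]
        rw [Finset.sum_range_succ, Finset.sum_range_one]
        simp only [TT, rf_zero, rf_one, rf_two, rf_three]
        norm_num [Nat.factorial]
        rw [show 3 / 2 * a * (a + b) / (2 * (b / 2) * (1 / 2 + b / 2))
              = 3 * a * (a + b) * (b + 2) / (b * (b + 1) * (b + 2)) by
            rw [div_eq_div_iff (mul_ne_zero (mul_ne_zero two_ne_zero hc0) hd0) hB]; ring]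
        rw [eq_div_iff hB, add_mul, div_mul_cancel₀ _ hB]
        ring
      · -- N = 4
        have hb0 : b ≠ 0 := by have := hfac 0 (by norm_num); simpa using this
        have hb1 : b + 1 ≠ 0 := by have := hfac 1 (by norm_num); simpa using this
        have hb2 : b + 2 ≠ 0 := by have := hfac 2 (by norm_num); simpa using this
        have hb3 : b + 3 ≠ 0 := by have := hfac 3 (by norm_num); simpa using this
        have hc0 : b / 2 ≠ 0 := by intro h; apply hb0; linarith
        have hc1 : b / 2 + 1 ≠ 0 := by intro h; apply hb2; linarith
        have hd0 : 1 / 2 + b / 2 ≠ 0 := by intro h; apply hb1; linarith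
        have hd1 : 1 / 2 + b / 2 + 1 ≠ 0 := by intro h; apply hb3; linarith
        have hB : b * (b + 1) * (b + 2) * (b + 3) ≠ 0 :=
          mul_ne_zero (mul_ne_zero (mul_ne_zero hb0 hb1) hb2) hb3
        simp only [show (4 : ℕ) / 2 + 1 = 3 by norm_num]
        rw [Finset.sum_range_succ, Finset.sum_range_succ, Finset.sum_range_one]
        simp only [TT, rf_zero, rf_one, rf_two, rf_three, rf_four]
        norm_num [Nat.factorial]
        rw [show 3 * a * (a + b) / (3 * (b / 2) * (1 / 2 + b / 2))
              = 4 * a * (a + b) * (b + 2) * (b + 3) / (b * (b + 1) * (b + 2) * (b + 3)) by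
            rw [div_eq_div_iff (mul_ne_zero (mul_ne_zero three_ne_zero hc0) hd0) hB]; ring]
        rw [show -(3 / 2 * (a * (-a + 1)) * ((a + b) * (a + b + 1)))
              / (12 * (b / 2 * (b / 2 + 1)) * ((1 / 2 + b / 2) * (1 / 2 + b / 2 + 1)))
              = 2 * a * (a - 1) * (a + b) * (a + b + 1) / (b * (b + 1) * (b + 2) * (b + 3)) by
            rw [div_eq_div_iff (mul_ne_zero (mul_ne_zero (by norm_num : (12:ℝ) ≠ 0)
              (mul_ne_zero hc0 hc1)) (mul_ne_zero hd0 hd1)) hB]; ring]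
        rw [eq_div_iff hB, add_mul, add_mul, div_mul_cancel₀ _ hB, div_mul_cancel₀ _ hB]
        ring
    · obtain ⟨M, rfl⟩ : ∃ M, N = M + 2 := ⟨N - 2, by omega⟩
      have hM : 3 ≤ M := by omega
      have hbM : rf b M ≠ 0 := rf_ne_zero fun i hi => rf_factor_ne_zero hb (by omega)
      have hbM1 : rf b (M + 1) ≠ 0 := rf_ne_zero fun i hi => rf_factor_ne_zero hb (by omega)
      have hdenM : ∀ k, k ≤ M / 2 → rf (b / 2) k ≠ 0 ∧ rf (1 / 2 + b / 2) k ≠ 0 :=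
        fun k hk => hden k (by omega)
      have hdenM1 : ∀ k, k ≤ (M + 1) / 2 → rf (b / 2) k ≠ 0 ∧ rf (1 / 2 + b / 2) k ≠ 0 :=
        fun k hk => hden k (by omega)
      have S2 := ih M (by omega) (by omega) a b hbM hdenM
      have S1 := ih (M + 1) (by omega) (by omega) a b hbM1 hdenM1
      have hrec := sum_rec a b M hM hden
      rw [sum_extend a b M ((M + 2) / 2) (by omega),
        sum_extend a b (M + 1) ((M + 2) / 2) (by omega), S2, S1] at hrec
      have frec := f_rec a b M hb
      have hf1 : b + (M : ℝ) ≠ 0 := rf_factor_ne_zero hb (by omega)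
      have hf2 : b + (M : ℝ) + 1 ≠ 0 := by
        have h := rf_factor_ne_zero hb (show M + 1 < M + 2 by omega)
        intro h0
        apply h
        push_cast
        linarith
      apply mul_left_cancel₀ (mul_ne_zero hf2 hf1)
      linear_combination hrec - frec

/-- The Andrews–Burge terminating `₄F₃` summation. -/
theorem stmt2 (N : ℕ) (hN : 0 < N) (a b : ℝ)
    (hb : rf b N ≠ 0)
    (hden : ∀ k ≤ N / 2, rf (b / 2) k ≠ 0 ∧ rf (1 / 2 + b / 2) k ≠ 0) :
    ∑ k ∈ Finset.range (N / 2 + 1),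
      rf (-(N : ℝ) / 2) k * rf (1 / 2 - (N : ℝ) / 2) k * rf (-a) k * rf (a + b) k
        / ((Nat.factorial k : ℝ) * rf (1 - (N : ℝ)) k * rf (b / 2) k * rf (1 / 2 + b / 2) k)
    = (rf (a + b) N + rf (-a) N) / rf b N :=
  main_aux N hN a b hb hden
end
end

section
/- (Correctness of Gosper's construction.) Let t(k) be a function with t(k+1)/t(k) = [p(k+1)/p(k)]·[q(k)/r(k+1)] for polynomials p, q, r, and suppose a polynomial s(k) satisfies p(k) = q(k)s(k+1) − r(k)s(k) for all k. Define T(k) := r(k)s(k)t(k)/p(k). Then t(k) = T(k+1) − T(k) for all k where the expressions are defined, and consequently Σ_{k=A}^{B} t(k) = T(B+1) − T(A). -/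
open Finset Polynomial

noncomputable section

/-- Correctness of Gosper's construction. -/
theorem stmt16 (A B : ℤ) (t : ℤ → ℝ) (p q r s : Polynomial ℝ)
    (ht : ∀ k : ℤ, A ≤ k → k ≤ B + 1 → t k ≠ 0)
    (hp : ∀ k : ℤ, A ≤ k → k ≤ B + 1 → p.eval (k : ℝ) ≠ 0)
    (hratio : ∀ k : ℤ, A ≤ k → k ≤ B →
      t (k + 1) * (p.eval (k : ℝ) * r.eval ((k : ℝ) + 1))
        = t k * (p.eval ((k : ℝ) + 1) * q.eval (k : ℝ)))
    (hgosper : ∀ k : ℝ, p.eval k = q.eval k * s.eval (k + 1) - r.eval k * s.eval k) :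
    (∀ k : ℤ, A ≤ k → k ≤ B →
      t k = (r.eval ((k : ℝ) + 1) * s.eval ((k : ℝ) + 1) * t (k + 1) / p.eval ((k : ℝ) + 1))
        - (r.eval (k : ℝ) * s.eval (k : ℝ) * t k / p.eval (k : ℝ)))
    ∧ (A ≤ B + 1 →
      ∑ k ∈ Finset.Icc A B, t k
        = (r.eval ((B : ℝ) + 1) * s.eval ((B : ℝ) + 1) * t (B + 1) / p.eval ((B : ℝ) + 1))
          - (r.eval (A : ℝ) * s.eval (A : ℝ) * t A / p.eval (A : ℝ))) := by
  set T : ℤ → ℝ := fun k => r.eval (k : ℝ) * s.eval (k : ℝ) * t k / p.eval (k : ℝ) with hT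
  have key : ∀ k : ℤ, A ≤ k → k ≤ B → t k = T (k + 1) - T k := by
    intro k hA hB
    have h1 : p.eval (k : ℝ) ≠ 0 := hp k hA (by omega)
    have h2 : p.eval ((k : ℝ) + 1) ≠ 0 := by
      have := hp (k + 1) (by omega) (by omega)
      push_cast at this
      exact this
    have hr := hratio k hA hB
    have hg := hgosper (k : ℝ)
    simp only [hT]
    push_cast
    field_simp
    linear_combination (-s.eval ((k:ℝ)+1)) * hr + (p.eval ((k:ℝ)+1) * t k) * hg
  have keyT : ∀ k : ℤ, A ≤ k → k ≤ B →
      t k = (r.eval ((k : ℝ) + 1) * s.eval ((k : ℝ) + 1) * t (k + 1) / p.eval ((k : ℝ) + 1))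
        - (r.eval (k : ℝ) * s.eval (k : ℝ) * t k / p.eval (k : ℝ)) := by
    intro k hA hB
    have := key k hA hB
    simp only [hT] at this
    push_cast at this
    exact this
  refine ⟨keyT, ?_⟩
  intro hAB
  have main : ∀ n : ℤ, A - 1 ≤ n → n ≤ B →
      ∑ k ∈ Finset.Icc A n, t k = T (n + 1) - T A := by
    refine fun n hn => Int.le_induction
        (motive := fun n _ => n ≤ B → ∑ k ∈ Finset.Icc A n, t k = T (n + 1) - T A) ?_ ?_ n hn
    · intro _
      rw [Finset.Icc_eq_empty (by omega), show A - 1 + 1 = A by omega]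
      simp
    · intro n hn' ih hB'
      have hins : Finset.Icc A (n + 1) = insert (n + 1) (Finset.Icc A n) := by
        ext x
        simp only [Finset.mem_Icc, Finset.mem_insert]
        omega
      rw [hins, Finset.sum_insert (by simp), ih (by omega),
        key (n + 1) (by omega) hB']
      ring
  have hmain := main B (by omega) le_rfl
  rw [hmain]
  simp only [hT]
  push_cast
  ring
end
end
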